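/- For all real x, y, every real order n, and every nonnegative integer m: Σ_{k=0}^{m} C(m,k) B_{m−k}^{(n)}(x) E_k^{(n)}(y) = 2^m B_m^{(n)}((x+y)/2). -/

import Mathlib

open scoped Nat ContDiff
open Finset



/-- Higher-order Euler polynomial `E_m^{(α)}(z)` of real order `α`, defined as the `m`-th
Taylor coefficient (times `m!`) of the generating function `(2/(e^u+1))^α e^{uz}` at `u = 0`. -/
noncomputable def eulerH (α : ℝ) (m : ℕ) (z : ℝ) : ℝ :=
  iteratedDeriv m (fun u : ℝ => (2 / (Real.exp u + 1)) ^ α * Real.exp (u * z)) 0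

/-- Higher-order Bernoulli polynomial `B_m^{(α)}(z)` of real order `α`, defined as the `m`-th
Taylor coefficient (times `m!`) of the generating function `(u/(e^u-1))^α e^{uz}` at `u = 0`
(the removable singularity at `u = 0` being filled in with the limit value `1`). -/
noncomputable def bernoulliH (α : ℝ) (m : ℕ) (z : ℝ) : ℝ :=
  iteratedDeriv m
    (fun u : ℝ => (if u = 0 then (1 : ℝ) else u / (Real.exp u - 1)) ^ α * Real.exp (u * z)) 0


/- Auxiliary development -/

noncomputable def phi (u : ℝ) : ℝ := ∑' k : ℕ, u ^ k / ((k + 1)! : ℝ)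


/-- The entire function `φ(u) = ∑ u^k/(k+1)!`, satisfying `u * φ u = e^u - 1`. -/

lemma summable_phi (u : ℝ) : Summable fun k : ℕ => u ^ k / ((k + 1)! : ℝ) := by
  refine Summable.of_norm ?_
  refine (Real.summable_pow_div_factorial |u|).of_nonneg_of_le (fun k => norm_nonneg _) ?_
  intro k
  rw [norm_div, norm_pow, Real.norm_eq_abs, Real.norm_natCast]
  gcongr
  omega

lemma mul_phi (u : ℝ) : u * phi u = Real.exp u - 1 := by
  have hexp : Real.exp u = ∑' k : ℕ, u ^ k / (k ! : ℝ) := by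
    rw [Real.exp_eq_exp_ℝ, NormedSpace.exp_eq_tsum_div]
  have hsum : Summable fun k : ℕ => u ^ k / (k ! : ℝ) := Real.summable_pow_div_factorial u
  have h0 : ∑' k : ℕ, u ^ k / (k ! : ℝ) =
      u ^ 0 / (0! : ℝ) + ∑' k : ℕ, u ^ (k + 1) / ((k + 1)! : ℝ) := hsum.tsum_eq_zero_add
  have : u * phi u = ∑' k : ℕ, u ^ (k + 1) / ((k + 1)! : ℝ) := by
    rw [phi, ← tsum_mul_left]
    refine tsum_congr fun k => ?_
    rw [pow_succ]
    ring
  rw [this]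
  have := h0
  simp only [pow_zero, Nat.factorial_zero, Nat.cast_one, div_one] at this
  rw [← hexp] at this
  linarith

lemma phi_zero : phi 0 = 1 := by
  rw [phi, tsum_eq_single 0]
  · simp
  · intro k hk
    simp [zero_pow hk]

lemma phi_pos (u : ℝ) : 0 < phi u := by
  rcases lt_trichotomy u 0 with h | h | h
  · have hm := mul_phi u
    have h1 : Real.exp u - 1 < 0 := by
      have := Real.exp_lt_one_iff.mpr h
      linarith
    nlinarith
  · simp [h, phi_zero]
  · have hm := mul_phi u
    have h1 : 0 < Real.exp u - 1 := by
      have := Real.one_lt_exp_iff.mpr h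
      linarith
    nlinarith

noncomputable def phiSeries : FormalMultilinearSeries ℝ ℝ ℝ := fun k =>
  (((k + 1)! : ℝ))⁻¹ • ContinuousMultilinearMap.mkPiAlgebraFin ℝ k ℝ

lemma phiSeries_norm_le (k : ℕ) : ‖phiSeries k‖ ≤ ((k ! : ℝ))⁻¹ := by
  have h := norm_smul ((((k + 1)! : ℝ))⁻¹) (ContinuousMultilinearMap.mkPiAlgebraFin ℝ k ℝ)
  rw [show phiSeries k = (((k + 1)! : ℝ))⁻¹ • ContinuousMultilinearMap.mkPiAlgebraFin ℝ k ℝ from rfl,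
    h, ContinuousMultilinearMap.norm_mkPiAlgebraFin, mul_one, norm_inv, Real.norm_natCast]
  gcongr
  omega

lemma phiSeries_radius : phiSeries.radius = ⊤ := by
  refine phiSeries.radius_eq_top_of_summable_norm fun r => ?_
  refine (Real.summable_pow_div_factorial r).of_nonneg_of_le
    (fun k => by positivity) fun k => ?_
  rw [div_eq_inv_mul]
  have h1 : (0:ℝ) ≤ (r:ℝ) ^ k := by positivity
  exact mul_le_mul_of_nonneg_right (phiSeries_norm_le k) h1

lemma hasFPowerSeries_phi : HasFPowerSeriesOnBall phi phiSeries 0 ⊤ := by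
  refine ⟨by rw [phiSeries_radius], ENNReal.zero_lt_top , ?_⟩
  intro y _
  have : (fun k : ℕ => phiSeries k fun _ => y) = fun k : ℕ => y ^ k / ((k + 1)! : ℝ) := by
    funext k
    simp [phiSeries, ContinuousMultilinearMap.mkPiAlgebraFin_apply, List.prod_ofFn,
      div_eq_inv_mul]
  rw [this, zero_add]
  exact (summable_phi y).hasSum

lemma contDiff_phi : ContDiff ℝ ∞ phi := by
  refine contDiff_iff_contDiffAt.2 fun x => ?_
  exact (hasFPowerSeries_phi.analyticAt_of_mem (by simp [edist_lt_top])).contDiffAt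

noncomputable def bF (α z : ℝ) : ℝ → ℝ :=
  fun u => (phi u)⁻¹ ^ α * Real.exp (u * z)

noncomputable def eF (α z : ℝ) : ℝ → ℝ :=
  fun u => (2 / (Real.exp u + 1)) ^ α * Real.exp (u * z)

lemma exp_add_one_pos (u : ℝ) : 0 < Real.exp u + 1 := by positivity

lemma contDiff_bF (α z : ℝ) : ContDiff ℝ ∞ (bF α z) := by
  refine ContDiff.mul ?_ ?_
  · exact (contDiff_phi.inv fun u => (phi_pos u).ne').rpow_const_of_ne
      fun u => inv_ne_zero (phi_pos u).ne'
  · exact Real.contDiff_exp.comp (contDiff_id.mul contDiff_const)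

lemma contDiff_eF (α z : ℝ) : ContDiff ℝ ∞ (eF α z) := by
  refine ContDiff.mul ?_ ?_
  · refine ContDiff.rpow_const_of_ne ?_ fun u => by positivity
    exact ContDiff.div contDiff_const
      (Real.contDiff_exp.add contDiff_const) fun u => (exp_add_one_pos u).ne'
  · exact Real.contDiff_exp.comp (contDiff_id.mul contDiff_const)

lemma bF_eq (α z : ℝ) : bF α z =
    fun u : ℝ => (if u = 0 then (1 : ℝ) else u / (Real.exp u - 1)) ^ α * Real.exp (u * z) := by
  funext u
  rcases eq_or_ne u 0 with rfl | hu
  · simp [bF, phi_zero]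
  · have h1 : Real.exp u - 1 ≠ 0 := by
      refine sub_ne_zero.mpr fun h => hu ?_
      have h0 : Real.exp u = Real.exp 0 := by rw [h, Real.exp_zero]
      exact Real.exp_eq_exp.mp h0
    have h2 : (phi u)⁻¹ = u / (Real.exp u - 1) := by
      rw [← mul_phi u]
      field_simp [(phi_pos u).ne']
    simp [bF, hu, h2]

lemma bernoulliH_eq (α : ℝ) (m : ℕ) (z : ℝ) :
    iteratedDeriv m
      (fun u : ℝ => (if u = 0 then (1 : ℝ) else u / (Real.exp u - 1)) ^ α * Real.exp (u * z)) 0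
    = iteratedDeriv m (bF α z) 0 := by rw [bF_eq]

lemma phi_two_mul (u : ℝ) : phi (2 * u) = phi u * (Real.exp u + 1) / 2 := by
  rcases eq_or_ne u 0 with rfl | hu
  · simp [phi_zero]
  · have h1 := mul_phi (2 * u)
    have h2 := mul_phi u
    have h3 : Real.exp (2 * u) = Real.exp u * Real.exp u := by
      rw [two_mul, Real.exp_add]
    have key : 2 * u * phi (2 * u) = 2 * u * (phi u * (Real.exp u + 1) / 2) := by
      rw [h1, h3]
      have h4 : 2 * u * (phi u * (Real.exp u + 1) / 2)
          = u * phi u * (Real.exp u + 1) := by ring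
      rw [h4, h2]
      ring
    exact mul_left_cancel₀ (by simpa using hu) key

lemma key_identity (α x y u : ℝ) :
    bF α x u * eF α y u = bF α ((x + y) / 2) (2 * u) := by
  have hb : (phi (2 * u))⁻¹ = (phi u)⁻¹ * (2 / (Real.exp u + 1)) := by
    rw [phi_two_mul]
    field_simp
  have hrpow : ((phi u)⁻¹ * (2 / (Real.exp u + 1))) ^ α
      = (phi u)⁻¹ ^ α * (2 / (Real.exp u + 1)) ^ α :=
    Real.mul_rpow (inv_nonneg.mpr (phi_pos u).le) (by positivity)
  have hexp : Real.exp (2 * u * ((x + y) / 2)) = Real.exp (u * x) * Real.exp (u * y) := by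
    rw [← Real.exp_add]
    ring_nf
  rw [bF, bF, eF, hb, hrpow, hexp]
  ring

lemma pascal_sum (a b : ℕ → ℝ) (m : ℕ) :
    ∑ k ∈ Finset.range (m + 1),
        (m.choose k : ℝ) * (a (m - k + 1) * b k + a (m - k) * b (k + 1))
      = ∑ k ∈ Finset.range (m + 2), ((m + 1).choose k : ℝ) * a (m + 1 - k) * b k := by
  have hRHS : ∑ k ∈ Finset.range (m + 2), ((m + 1).choose k : ℝ) * a (m + 1 - k) * b k
      = (∑ k ∈ Finset.range (m + 1), (m.choose k : ℝ) * a (m - k) * b (k + 1))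
        + ((∑ k ∈ Finset.range (m + 1), (m.choose (k + 1) : ℝ) * a (m - k) * b (k + 1))
        + a (m + 1) * b 0) := by
    rw [Finset.sum_range_succ' (fun k => ((m + 1).choose k : ℝ) * a (m + 1 - k) * b k)]
    simp only [Nat.succ_sub_succ, Nat.choose_succ_succ, Nat.choose_zero_right,
      Nat.cast_add, Nat.cast_one, Nat.sub_zero]
    rw [one_mul, ← add_assoc, ← Finset.sum_add_distrib]
    congr 1
    refine Finset.sum_congr rfl fun k _ => ?_
    ring
  have hA : ∑ k ∈ Finset.range (m + 1), (m.choose k : ℝ) * a (m - k + 1) * b k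
      = (∑ k ∈ Finset.range (m + 1), (m.choose (k + 1) : ℝ) * a (m - k) * b (k + 1))
        + a (m + 1) * b 0 := by
    rw [Finset.sum_range_succ (fun k => (m.choose (k + 1) : ℝ) * a (m - k) * b (k + 1))]
    rw [Nat.choose_succ_self]
    rw [Finset.sum_range_succ' (fun k => (m.choose k : ℝ) * a (m - k + 1) * b k)]
    simp only [Nat.choose_zero_right, Nat.cast_one, Nat.cast_zero, zero_mul, add_zero,
      Nat.sub_zero, one_mul]
    congr 1
    refine Finset.sum_congr rfl fun k hk => ?_
    have hk' := Finset.mem_range.mp hk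
    rw [show m - (k + 1) + 1 = m - k from by omega]
  have hsplit : ∑ k ∈ Finset.range (m + 1),
      (m.choose k : ℝ) * (a (m - k + 1) * b k + a (m - k) * b (k + 1))
      = (∑ k ∈ Finset.range (m + 1), (m.choose k : ℝ) * a (m - k + 1) * b k)
        + ∑ k ∈ Finset.range (m + 1), (m.choose k : ℝ) * a (m - k) * b (k + 1) := by
    rw [← Finset.sum_add_distrib]
    refine Finset.sum_congr rfl fun k _ => by ring
  rw [hsplit, hA, hRHS]
  ring

lemma one_le_inf : (1 : WithTop ℕ∞) ≤ ∞ := by exact_mod_cast le_top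

lemma leibniz_iteratedDeriv {f g : ℝ → ℝ} (hf : ContDiff ℝ ∞ f) (hg : ContDiff ℝ ∞ g) :
    ∀ m : ℕ, iteratedDeriv m (fun u => f u * g u)
      = fun x => ∑ k ∈ Finset.range (m + 1),
          (m.choose k : ℝ) * iteratedDeriv (m - k) f x * iteratedDeriv k g x := by
  have hF : ∀ k, Differentiable ℝ (iteratedDeriv k f) := fun k => by
    rw [iteratedDeriv_eq_iterate]
    exact (hf.iterate_deriv k).differentiable (by simp)
  have hG : ∀ k, Differentiable ℝ (iteratedDeriv k g) := fun k => by
    rw [iteratedDeriv_eq_iterate]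
    exact (hg.iterate_deriv k).differentiable (by simp)
  intro m
  induction m with
  | zero => funext x; simp
  | succ m IH =>
    funext x
    rw [iteratedDeriv_succ, IH]
    have hdiff : ∀ k ∈ Finset.range (m + 1), DifferentiableAt ℝ
        (fun y => (m.choose k : ℝ) * iteratedDeriv (m - k) f y * iteratedDeriv k g y) x := by
      intro k _
      exact ((((hF (m - k)).const_mul _).mul (hG k))).differentiableAt
    rw [deriv_fun_sum hdiff]
    have hderiv : ∀ k ∈ Finset.range (m + 1), deriv
        (fun y => (m.choose k : ℝ) * iteratedDeriv (m - k) f y * iteratedDeriv k g y) x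
        = (m.choose k : ℝ) * (iteratedDeriv (m - k + 1) f x * iteratedDeriv k g x
            + iteratedDeriv (m - k) f x * iteratedDeriv (k + 1) g x) := by
      intro k _
      have h1 : (fun y => (m.choose k : ℝ) * iteratedDeriv (m - k) f y * iteratedDeriv k g y)
          = fun y => (m.choose k : ℝ) *
              (iteratedDeriv (m - k) f y * iteratedDeriv k g y) := by
        funext y; ring
      rw [h1, deriv_const_mul _ (((hF (m - k)).fun_mul (hG k)).differentiableAt),
        deriv_fun_mul ((hF (m - k)).differentiableAt) ((hG k)).differentiableAt,
        ← iteratedDeriv_succ, ← iteratedDeriv_succ]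
    rw [Finset.sum_congr rfl hderiv]
    have := pascal_sum (fun j => iteratedDeriv j f x) (fun j => iteratedDeriv j g x) m
    rw [this]

theorem stmt_4 (x y n : ℝ) (m : ℕ) :
    ∑ k ∈ Finset.range (m + 1),
        (Nat.choose m k : ℝ) * bernoulliH n (m - k) x * eulerH n k y
      = 2 ^ m * bernoulliH n m ((x + y) / 2) := by
  have hm : (m : WithTop ℕ∞) ≤ ∞ := by exact_mod_cast le_top
  have hbx : ∀ k z, bernoulliH n k z = iteratedDeriv k (bF n z) 0 := by
    intro k z
    rw [bernoulliH, bF_eq]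
  have hey : ∀ k, eulerH n k y = iteratedDeriv k (eF n y) 0 := fun k => rfl
  have step1 : ∑ k ∈ Finset.range (m + 1),
      (Nat.choose m k : ℝ) * bernoulliH n (m - k) x * eulerH n k y
      = iteratedDeriv m (fun u => bF n x u * eF n y u) 0 := by
    rw [leibniz_iteratedDeriv (contDiff_bF n x) (contDiff_eF n y) m]
    refine Finset.sum_congr rfl fun k _ => ?_
    rw [hbx, hey]
  have step2 : (fun u : ℝ => bF n x u * eF n y u)
      = fun u : ℝ => bF n ((x + y) / 2) (2 * u) := by
    funext u
    exact key_identity n x y u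
  have step3 := iteratedDeriv_comp_const_mul ((contDiff_bF n ((x + y) / 2)).of_le hm) (2 : ℝ)
  rw [step1, step2, congrFun step3 0]
  rw [mul_zero, hbx]
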